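/- Let H be a finite group and S ⊆ H. Then Aut(Cay(H,S)) = Aut(⟨⟨S⟩⟩), where ⟨⟨S⟩⟩ denotes the smallest S-ring over H containing the simple quantity of S. -/

import Mathlib

open scoped Classical Pointwise

noncomputable section

variable {H : Type*}

/-- The simple quantity of a subset `T` of `H` in the group algebra `ℚ H`. -/
def simpleQ [Group H] [Fintype H] (T : Set H) : MonoidAlgebra ℚ H :=
  ∑ h ∈ T.toFinset, MonoidAlgebra.single h (1 : ℚ)

/-- An S-ring over a finite group `H`: a partition of `H` containing `{1}`,
closed under inversion, whose simple quantities span a subalgebra of `ℚ H`. -/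
structure SRing (H : Type*) [Group H] [Fintype H] where
  basicSets : Set (Set H)
  exists_unique_mem : ∀ h : H, ∃! T, T ∈ basicSets ∧ h ∈ T
  nonempty_of_mem : ∀ T ∈ basicSets, T.Nonempty
  one_mem : ({1} : Set H) ∈ basicSets
  inv_mem : ∀ T ∈ basicSets, T⁻¹ ∈ basicSets
  mul_mem : ∀ T ∈ basicSets, ∀ S ∈ basicSets,
    simpleQ T * simpleQ S ∈ Submodule.span ℚ (simpleQ '' basicSets)

namespace SRing

variable [Group H] [Fintype H]

/-- The underlying ℚ-subspace of the S-ring. -/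
def carrier (A : SRing H) : Submodule ℚ (MonoidAlgebra ℚ H) :=
  Submodule.span ℚ (simpleQ '' A.basicSets)

/-- `S` is an `𝒜`-subset: its simple quantity lies in `𝒜`. -/
def IsSubset (A : SRing H) (S : Set H) : Prop := simpleQ S ∈ A.carrier

/-- The thin radical of the S-ring. -/
def thin (A : SRing H) : Set H := {g | ({g} : Set H) ∈ A.basicSets}

end SRing

/-- The radical of a subset `S`: elements `h` with `hS = Sh = S`. -/
def radSet [Group H] (S : Set H) : Set H := {h | {h} * S = S ∧ S * {h} = S}

/-- The automorphism group of the Cayley digraph `Cay(H, T)`. -/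
def cayAut [Group H] (T : Set H) : Subgroup (Equiv.Perm H) where
  carrier := {g | ∀ x y : H, y * x⁻¹ ∈ T ↔ g y * (g x)⁻¹ ∈ T}
  one_mem' := by intro x y; simp
  mul_mem' := by
    intro a b ha hb x y
    simpa [Equiv.Perm.mul_apply] using (hb x y).trans (ha (b x) (b y))
  inv_mem' := by
    intro a ha x y
    simpa using (ha (a⁻¹ x) (a⁻¹ y)).symm

/-- The automorphism group of an S-ring. -/
def SRing.aut [Group H] [Fintype H] (A : SRing H) : Subgroup (Equiv.Perm H) :=
  ⨅ T ∈ A.basicSets, cayAut T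

/-- The right regular representation of `H` inside `Sym(H)`. -/
def rightRegular (H : Type*) [Group H] : Subgroup (Equiv.Perm H) where
  carrier := Set.range fun h : H => Equiv.mulRight h
  one_mem' := ⟨1, by ext x; simp⟩
  mul_mem' := by
    rintro _ _ ⟨a, rfl⟩ ⟨b, rfl⟩
    exact ⟨b * a, by ext x; simp [mul_assoc]⟩
  inv_mem' := by
    rintro _ ⟨a, rfl⟩
    exact ⟨a⁻¹, by ext x; simp⟩

/-- The orbit of `h` under the stabilizer of the identity in `G ≤ Sym(H)`. -/
def orbitOfStab [Group H] (G : Subgroup (Equiv.Perm H)) (h : H) : Set H :=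
  {x | ∃ g ∈ G, g 1 = 1 ∧ g h = x}

/-- A Schurian S-ring: its basic sets are the orbits of the identity-stabilizer
of some overgroup of the right regular representation. -/
def SRing.IsSchurian [Group H] [Fintype H] (A : SRing H) : Prop :=
  ∃ G : Subgroup (Equiv.Perm H), rightRegular H ≤ G ∧
    A.basicSets = {S | ∃ h : H, S = orbitOfStab G h}

/-- A p-S-ring: all basic sets have `p`-power size. -/
def SRing.IsPSRing [Group H] [Fintype H] (A : SRing H) (p : ℕ) : Prop :=
  ∀ T ∈ A.basicSets, ∃ k : ℕ, Nat.card T = p ^ k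

/-- A decomposable S-ring: a nontrivial `E/F`-wreath product. -/
def SRing.Decomposable [Group H] [Fintype H] (A : SRing H) : Prop :=
  ∃ E F : Subgroup H, F.Normal ∧ F ≤ E ∧ E ≠ ⊤ ∧ F ≠ ⊥ ∧
    A.IsSubset ↑E ∧ A.IsSubset ↑F ∧
    ∀ T ∈ A.basicSets, T ⊆ ((E : Set H))ᶜ → (F : Set H) ⊆ radSet T

/-- The 2-closure of a permutation group `G ≤ Sym(Ω)`: all permutations
preserving every `G`-orbit on `Ω × Ω`. -/
def twoClosure {Ω : Type*} (G : Subgroup (Equiv.Perm Ω)) : Subgroup (Equiv.Perm Ω) where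
  carrier := {γ | ∀ a b : Ω, ∃ g ∈ G, g a = γ a ∧ g b = γ b}
  one_mem' := fun a b => ⟨1, G.one_mem, rfl, rfl⟩
  mul_mem' := by
    intro γ δ hγ hδ a b
    obtain ⟨g, hg, hga, hgb⟩ := hδ a b
    obtain ⟨g', hg', hg'a, hg'b⟩ := hγ (δ a) (δ b)
    exact ⟨g' * g, G.mul_mem hg' hg, by simp [Equiv.Perm.mul_apply, hga, hg'a],
      by simp [Equiv.Perm.mul_apply, hgb, hg'b]⟩
  inv_mem' := by
    intro γ hγ a b
    obtain ⟨g, hg, hga, hgb⟩ := hγ (γ⁻¹ a) (γ⁻¹ b)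
    have h1 : g (γ⁻¹ a) = a := by rw [hga]; show (γ * γ⁻¹) a = a; rw [mul_inv_cancel, Equiv.Perm.one_apply]
    have h2 : g (γ⁻¹ b) = b := by rw [hgb]; show (γ * γ⁻¹) b = b; rw [mul_inv_cancel, Equiv.Perm.one_apply]
    refine ⟨g⁻¹, G.inv_mem hg, ?_, ?_⟩
    · exact g.injective (by show (g * g⁻¹) a = g (γ⁻¹ a); rw [mul_inv_cancel, Equiv.Perm.one_apply, h1])
    · exact g.injective (by show (g * g⁻¹) b = g (γ⁻¹ b); rw [mul_inv_cancel, Equiv.Perm.one_apply, h2])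



/-! ### Auxiliary development -/

section Aux

set_option linter.unusedSectionVars false
set_option linter.unusedVariables false

variable [Group H] [Fintype H]

lemma simpleQ_apply (T : Set H) (x : H) : (simpleQ T).coeff x = if x ∈ T then 1 else 0 := by
  classical
  rw [simpleQ, MonoidAlgebra.coeff_sum, Finsupp.finset_sum_apply]
  simp only [MonoidAlgebra.coeff_single, Finsupp.single_apply]
  rw [Finset.sum_ite_eq' T.toFinset x (fun _ => (1:ℚ))]
  simp [Set.mem_toFinset]

/-- A partition predicate. -/
def IsPart (P : Set (Set H)) : Prop := ∀ h : H, ∃! T, T ∈ P ∧ h ∈ T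

lemma mem_span_part {P : Set (Set H)} (hP : IsPart P) (f : MonoidAlgebra ℚ H) :
    f ∈ Submodule.span ℚ (simpleQ '' P) ↔
      ∀ T ∈ P, ∀ a ∈ T, ∀ b ∈ T, f.coeff a = f.coeff b := by
  constructor
  · intro hf
    induction hf using Submodule.span_induction with
    | mem x hx =>
        rintro T hT a ha b hb
        obtain ⟨U, hU, rfl⟩ := hx
        rw [simpleQ_apply, simpleQ_apply]
        by_cases haU : a ∈ U
        · obtain rfl : T = U := (hP a).unique ⟨hT, ha⟩ ⟨hU, haU⟩
          simp [haU, hb]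
        · have hbU : b ∉ U := fun hbU => haU (((hP b).unique ⟨hT, hb⟩ ⟨hU, hbU⟩) ▸ ha)
          simp [haU, hbU]
    | zero => intro T hT a ha b hb; simp
    | add x y hx hy ihx ihy =>
        intro T hT a ha b hb
        change x.coeff a + y.coeff a = x.coeff b + y.coeff b
        rw [ihx T hT a ha b hb, ihy T hT a ha b hb]
    | smul c x hx ih =>
        intro T hT a ha b hb
        change c • x.coeff a = c • x.coeff b
        rw [ih T hT a ha b hb]
  · intro hf
    have key : f = ∑ T ∈ (Set.toFinite P).toFinset,
        (if hT : T.Nonempty then f.coeff hT.choose else 0) • simpleQ T := by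
      ext x
      rw [MonoidAlgebra.coeff_sum, Finsupp.finset_sum_apply]
      obtain ⟨B, ⟨hBP, hxB⟩, hBu⟩ := hP x
      rw [Finset.sum_eq_single B]
      · have hBne : B.Nonempty := ⟨x, hxB⟩
        rw [dif_pos hBne]
        rw [MonoidAlgebra.coeff_smul, Finsupp.smul_apply, simpleQ_apply, if_pos hxB]
        have := hf B hBP _ hBne.choose_spec x hxB
        simp [this]
      · intro T hT hTB
        rw [MonoidAlgebra.coeff_smul, Finsupp.smul_apply, simpleQ_apply, if_neg, smul_zero]
        intro hxT
        exact hTB (hBu T ⟨(Set.Finite.mem_toFinset _).mp hT, hxT⟩)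
      · intro hB
        exact absurd ((Set.Finite.mem_toFinset _).mpr hBP) hB
    rw [key]
    exact Submodule.sum_mem _ fun T hT => Submodule.smul_mem _ _
      (Submodule.subset_span ⟨T, (Set.Finite.mem_toFinset _).mp hT, rfl⟩)

lemma SRing.mem_carrier_iff (A : SRing H) (f : MonoidAlgebra ℚ H) :
    f ∈ A.carrier ↔ ∀ T ∈ A.basicSets, ∀ a ∈ T, ∀ b ∈ T, f.coeff a = f.coeff b :=
  mem_span_part A.exists_unique_mem f

lemma SRing.simpleQ_mem_carrier (A : SRing H) {T : Set H} (hT : T ∈ A.basicSets) :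
    simpleQ T ∈ A.carrier :=
  Submodule.subset_span ⟨T, hT, rfl⟩

lemma SRing.mul_mem_carrier (A : SRing H) {f g : MonoidAlgebra ℚ H}
    (hf : f ∈ A.carrier) (hg : g ∈ A.carrier) : f * g ∈ A.carrier := by
  induction hf using Submodule.span_induction with
  | mem x hx =>
    induction hg using Submodule.span_induction with
    | mem y hy =>
        obtain ⟨T, hT, rfl⟩ := hx
        obtain ⟨U, hU, rfl⟩ := hy
        exact A.mul_mem T hT U hU
    | zero => rw [mul_zero]; exact A.carrier.zero_mem
    | add y z hy hz ihy ihz => rw [mul_add]; exact A.carrier.add_mem ihy ihz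
    | smul c y hy ihy => rw [mul_smul_comm]; exact A.carrier.smul_mem _ ihy
  | zero => rw [zero_mul]; exact A.carrier.zero_mem
  | add x y hx hy ihx ihy => rw [add_mul]; exact A.carrier.add_mem ihx ihy
  | smul c x hx ihx => rw [smul_mul_assoc]; exact A.carrier.smul_mem _ ihx

lemma mem_cayAut_iff {T : Set H} {g : Equiv.Perm H} :
    g ∈ cayAut T ↔ ∀ x y : H, y * x⁻¹ ∈ T ↔ g y * (g x)⁻¹ ∈ T := Iff.rfl

lemma SRing.mem_aut_iff {A : SRing H} {g : Equiv.Perm H} :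
    g ∈ A.aut ↔ ∀ T ∈ A.basicSets, g ∈ cayAut T := by
  simp [SRing.aut, Subgroup.mem_iInf]

/-- If the simple quantity of `T` is in the carrier and `γ` preserves all basic
Cayley relations, then `γ` preserves the relation of `T`. -/
lemma cayAut_of_carrier (A : SRing H) {T : Set H} (hT : simpleQ T ∈ A.carrier)
    {γ : Equiv.Perm H} (hγ : ∀ U ∈ A.basicSets, γ ∈ cayAut U) : γ ∈ cayAut T := by
  intro x y
  obtain ⟨U, ⟨hU, hyx⟩, _⟩ := A.exists_unique_mem (y * x⁻¹)
  have h2 : γ y * (γ x)⁻¹ ∈ U := (hγ U hU x y).mp hyx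
  have e1 := (A.mem_carrier_iff _).mp hT U hU _ hyx _ h2
  rw [simpleQ_apply, simpleQ_apply] at e1
  constructor
  · intro h; by_contra h'; rw [if_pos h, if_neg h'] at e1; exact one_ne_zero e1
  · intro h; by_contra h'; rw [if_neg h', if_pos h] at e1; exact zero_ne_one e1

lemma SRing.aut_le_cayAut (A : SRing H) {T : Set H} (hT : simpleQ T ∈ A.carrier) :
    A.aut ≤ cayAut T := fun γ hγ =>
  cayAut_of_carrier A hT (SRing.mem_aut_iff.mp hγ)

/-! ### The Schurian S-ring of a transitive overgroup -/

lemma rightRegular_le_cayAut (S : Set H) : rightRegular H ≤ cayAut S := by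
  rintro γ ⟨a, rfl⟩ x y
  simp [mul_inv_rev, mul_assoc]

lemma mulRight_mem {G : Subgroup (Equiv.Perm H)} (hG : rightRegular H ≤ G) (a : H) :
    (Equiv.mulRight a : Equiv.Perm H) ∈ G := hG ⟨a, rfl⟩

variable {G : Subgroup (Equiv.Perm H)}

lemma mem_orbit_self (h : H) : h ∈ orbitOfStab G h := ⟨1, one_mem G, rfl, rfl⟩

lemma orbit_mem_of_stab {g : Equiv.Perm H} (hg : g ∈ G) (hg1 : g 1 = 1) {h u : H}
    (hu : u ∈ orbitOfStab G h) : g u ∈ orbitOfStab G h := by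
  obtain ⟨g', hg', hg'1, rfl⟩ := hu
  exact ⟨g * g', mul_mem hg hg', by simp [Equiv.Perm.mul_apply, hg'1, hg1], rfl⟩

lemma orbit_eq_of_mem {a b : H} (hb : b ∈ orbitOfStab G a) :
    orbitOfStab G b = orbitOfStab G a := by
  obtain ⟨g, hg, hg1, rfl⟩ := hb
  ext x
  constructor
  · rintro ⟨g', hg', hg'1, rfl⟩
    exact ⟨g' * g, mul_mem hg' hg, by simp [Equiv.Perm.mul_apply, hg1, hg'1], rfl⟩
  · rintro ⟨g', hg', hg'1, rfl⟩
    have hg1' : g⁻¹ 1 = 1 := by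
      have : g⁻¹ (g 1) = g⁻¹ 1 := by rw [hg1]
      simpa using this.symm
    exact ⟨g' * g⁻¹, mul_mem hg' (inv_mem hg),
      by simp [Equiv.Perm.mul_apply, hg1', hg'1],
      by simp [Equiv.Perm.mul_apply]⟩

lemma orbit_arc (hG : rightRegular H ≤ G) {γ : Equiv.Perm H} (hγ : γ ∈ G) (h x y : H)
    (hxy : y * x⁻¹ ∈ orbitOfStab G h) : γ y * (γ x)⁻¹ ∈ orbitOfStab G h := by
  obtain ⟨g, hg, hg1, hgh⟩ := hxy
  refine ⟨Equiv.mulRight (γ x)⁻¹ * γ * Equiv.mulRight x * g,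
    mul_mem (mul_mem (mul_mem (mulRight_mem hG _) hγ) (mulRight_mem hG _)) hg, ?_, ?_⟩
  · simp [Equiv.Perm.mul_apply, hg1]
  · simp [Equiv.Perm.mul_apply, hgh]

lemma orbit_arc_iff (hG : rightRegular H ≤ G) {γ : Equiv.Perm H} (hγ : γ ∈ G) (h x y : H) :
    y * x⁻¹ ∈ orbitOfStab G h ↔ γ y * (γ x)⁻¹ ∈ orbitOfStab G h := by
  refine ⟨orbit_arc hG hγ h x y, fun hm => ?_⟩
  have := orbit_arc hG (inv_mem hγ) h (γ x) (γ y) hm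
  simpa using this

lemma orbit_inv (hG : rightRegular H ≤ G) (h : H) :
    (orbitOfStab G h)⁻¹ = orbitOfStab G h⁻¹ := by
  ext x
  simp only [Set.mem_inv]
  constructor
  · rintro ⟨g, hg, hg1, hgh⟩
    refine ⟨Equiv.mulRight (g h)⁻¹ * g * Equiv.mulRight h,
      mul_mem (mul_mem (mulRight_mem hG _) hg) (mulRight_mem hG _), ?_, ?_⟩
    · simp [Equiv.Perm.mul_apply]
    · simp [Equiv.Perm.mul_apply, hg1, hgh]
  · rintro ⟨g, hg, hg1, hgh⟩
    refine ⟨Equiv.mulRight (g h⁻¹)⁻¹ * g * Equiv.mulRight h⁻¹,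
      mul_mem (mul_mem (mulRight_mem hG _) hg) (mulRight_mem hG _), ?_, ?_⟩
    · simp [Equiv.Perm.mul_apply]
    · simp [Equiv.Perm.mul_apply, hg1, hgh]

lemma simpleQ_mul_apply (T U : Set H) (z : H) :
    (simpleQ T * simpleQ U).coeff z
      = ∑ u ∈ U.toFinset, (if z * u⁻¹ ∈ T then (1:ℚ) else 0) := by
  classical
  rw [simpleQ, simpleQ, Finset.sum_mul_sum]
  simp only [MonoidAlgebra.single_mul_single, one_mul]
  rw [MonoidAlgebra.coeff_sum, Finsupp.finset_sum_apply]
  have inner : ∀ i : H,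
      ((∑ x ∈ U.toFinset, MonoidAlgebra.single (i * x) (1:ℚ) : MonoidAlgebra ℚ H)).coeff z
        = ∑ x ∈ U.toFinset, ((MonoidAlgebra.single (i * x) (1:ℚ) : MonoidAlgebra ℚ H).coeff z) :=
    fun i => by rw [MonoidAlgebra.coeff_sum, Finsupp.finset_sum_apply]
  simp only [inner]
  rw [Finset.sum_comm]
  refine Finset.sum_congr rfl fun u hu => ?_
  have : ∀ t : H, ((MonoidAlgebra.single (t * u) (1:ℚ) : MonoidAlgebra ℚ H).coeff z)
      = if t = z * u⁻¹ then (1:ℚ) else 0 := by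
    intro t
    rw [MonoidAlgebra.coeff_single, Finsupp.single_apply]
    congr 1
    rw [eq_iff_iff]
    exact ⟨fun ht => by rw [← ht]; group, fun ht => by rw [ht]; group⟩
  simp only [this]
  rw [Finset.sum_ite_eq' T.toFinset (z * u⁻¹) (fun _ => (1:ℚ))]
  simp [Set.mem_toFinset]

lemma orbit_mul_const (hG : rightRegular H ≤ G) (h1 h2 : H) {g : Equiv.Perm H}
    (hg : g ∈ G) (hg1 : g 1 = 1) (z : H) :
    (simpleQ (orbitOfStab G h1) * simpleQ (orbitOfStab G h2)).coeff (g z)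
      = (simpleQ (orbitOfStab G h1) * simpleQ (orbitOfStab G h2)).coeff z := by
  classical
  rw [simpleQ_mul_apply, simpleQ_mul_apply]
  refine Finset.sum_nbij' (fun u => g⁻¹ u) (fun u => g u) ?_ ?_ ?_ ?_ ?_
  · intro u hu
    rw [Set.mem_toFinset] at hu ⊢
    have hg1' : g⁻¹ 1 = 1 := by
      have : g⁻¹ (g 1) = g⁻¹ 1 := by rw [hg1]
      simpa using this.symm
    exact orbit_mem_of_stab (inv_mem hg) hg1' hu
  · intro u hu
    rw [Set.mem_toFinset] at hu ⊢
    exact orbit_mem_of_stab hg hg1 hu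
  · intro u _; simp
  · intro u _; simp
  · intro u hu
    congr 1
    rw [eq_iff_iff]
    have := orbit_arc_iff (G := G) hG hg h1 (g⁻¹ u) z
    simpa using this.symm

/-- The Schurian S-ring associated with an overgroup of the right regular
representation. -/
def schurian (G : Subgroup (Equiv.Perm H)) (hG : rightRegular H ≤ G) : SRing H where
  basicSets := {T | ∃ h : H, T = orbitOfStab G h}
  exists_unique_mem := fun h =>
    ⟨orbitOfStab G h, ⟨⟨h, rfl⟩, mem_orbit_self h⟩, by
      rintro T ⟨⟨a, rfl⟩, hmem⟩
      rw [← orbit_eq_of_mem hmem]⟩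
  nonempty_of_mem := by rintro T ⟨h, rfl⟩; exact ⟨h, mem_orbit_self h⟩
  one_mem := by
    refine ⟨1, ?_⟩
    ext x
    simp only [Set.mem_singleton_iff]
    constructor
    · rintro rfl; exact mem_orbit_self 1
    · rintro ⟨g, hg, hg1, rfl⟩; exact hg1
  inv_mem := by rintro T ⟨h, rfl⟩; exact ⟨h⁻¹, orbit_inv hG h⟩
  mul_mem := by
    rintro T ⟨h1, rfl⟩ U ⟨h2, rfl⟩
    have hpart : IsPart {T : Set H | ∃ h : H, T = orbitOfStab G h} := fun h =>
      ⟨orbitOfStab G h, ⟨⟨h, rfl⟩, mem_orbit_self h⟩, by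
        rintro T ⟨⟨a, rfl⟩, hmem⟩
        rw [← orbit_eq_of_mem hmem]⟩
    rw [mem_span_part hpart]
    rintro V ⟨h, rfl⟩ a ha b hb
    obtain ⟨ga, hga, hga1, rfl⟩ := ha
    obtain ⟨gb, hgb, hgb1, rfl⟩ := hb
    have hga1' : ga⁻¹ 1 = 1 := by
      have : ga⁻¹ (ga 1) = ga⁻¹ 1 := by rw [hga1]
      simpa using this.symm
    have h1 := orbit_mul_const hG h1 h2 (mul_mem hgb (inv_mem hga))
      (by simp [Equiv.Perm.mul_apply, hga1', hgb1]) (ga h)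
    have h2' : (gb * ga⁻¹) (ga h) = gb h := by simp [Equiv.Perm.mul_apply]
    rw [h2'] at h1
    exact h1.symm

/-! ### The minimal S-ring containing `S` -/

/-- One step of the join relation: same basic set of some S-ring containing `S`. -/
def jrel (S : Set H) : H → H → Prop := fun a b =>
  ∃ C : SRing H, C.IsSubset S ∧ ∃ T ∈ C.basicSets, a ∈ T ∧ b ∈ T

/-- Its equivalence closure. -/
def jcl (S : Set H) : H → H → Prop := Relation.EqvGen (jrel S)

/-- The blocks: equivalence classes of `jcl`. -/
def jblocks (S : Set H) : Set (Set H) := {T | ∃ h : H, T = {x | jcl S h x}}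

lemma jblocks_part (S : Set H) : IsPart (jblocks S) := fun h =>
  ⟨{x | jcl S h x}, ⟨⟨h, rfl⟩, Relation.EqvGen.refl h⟩, by
    rintro T ⟨⟨a, rfl⟩, hmem⟩
    ext x
    simp only [Set.mem_setOf_eq]
    have hah : Relation.EqvGen (jrel S) a h := hmem
    exact ⟨fun hax => Relation.EqvGen.trans _ _ _ (Relation.EqvGen.symm _ _ hah) hax,
      fun hhx => Relation.EqvGen.trans _ _ _ hah hhx⟩⟩

lemma jcl_one {S : Set H} {a b : H} (h : jcl S a b) : a = 1 ↔ b = 1 := by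
  induction h with
  | rel x y hxy =>
      obtain ⟨C, _, T, hT, hx, hy⟩ := hxy
      constructor
      · rintro rfl
        have : T = ({1} : Set H) := (C.exists_unique_mem 1).unique ⟨hT, hx⟩ ⟨C.one_mem, rfl⟩
        rw [this] at hy; exact hy
      · rintro rfl
        have : T = ({1} : Set H) := (C.exists_unique_mem 1).unique ⟨hT, hy⟩ ⟨C.one_mem, rfl⟩
        rw [this] at hx; exact hx
  | refl x => exact Iff.rfl
  | symm x y _ ih => exact ih.symm
  | trans x y z _ _ ih1 ih2 => exact ih1.trans ih2

lemma jcl_inv {S : Set H} {a b : H} (h : jcl S a b) : jcl S a⁻¹ b⁻¹ := by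
  induction h with
  | rel x y hxy =>
      obtain ⟨C, hC, T, hT, hx, hy⟩ := hxy
      exact Relation.EqvGen.rel _ _ ⟨C, hC, T⁻¹, C.inv_mem T hT,
        by rwa [Set.mem_inv, inv_inv], by rwa [Set.mem_inv, inv_inv]⟩
  | refl x => exact Relation.EqvGen.refl _
  | symm x y _ ih => exact Relation.EqvGen.symm _ _ ih
  | trans x y z _ _ ih1 ih2 => exact Relation.EqvGen.trans _ _ _ ih1 ih2

lemma jcl_apply_eq {S : Set H} {f : MonoidAlgebra ℚ H}
    (hf : ∀ C : SRing H, C.IsSubset S → f ∈ C.carrier) {a b : H} (h : jcl S a b) :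
    f.coeff a = f.coeff b := by
  induction h with
  | rel x y hxy =>
      obtain ⟨C, hC, T, hT, hx, hy⟩ := hxy
      exact (C.mem_carrier_iff f).mp (hf C hC) T hT x hx y hy
  | refl x => rfl
  | symm x y _ ih => exact ih.symm
  | trans x y z _ _ ih1 ih2 => exact ih1.trans ih2

lemma mem_jspan_iff (S : Set H) (f : MonoidAlgebra ℚ H) :
    f ∈ Submodule.span ℚ (simpleQ '' jblocks S) ↔
      ∀ C : SRing H, C.IsSubset S → f ∈ C.carrier := by
  rw [mem_span_part (jblocks_part S)]
  constructor
  · intro hf C hC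
    rw [C.mem_carrier_iff]
    intro T hT a ha b hb
    exact hf {x | jcl S a x} ⟨a, rfl⟩ a (Relation.EqvGen.refl a) b
      (Relation.EqvGen.rel _ _ ⟨C, hC, T, hT, ha, hb⟩)
  · rintro hf T ⟨h, rfl⟩ a ha b hb
    exact jcl_apply_eq hf (Relation.EqvGen.trans _ _ _ (Relation.EqvGen.symm _ _ ha) hb)

/-- The minimal S-ring containing `S`. -/
def jring (S : Set H) : SRing H where
  basicSets := jblocks S
  exists_unique_mem := jblocks_part S
  nonempty_of_mem := by rintro T ⟨h, rfl⟩; exact ⟨h, Relation.EqvGen.refl h⟩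
  one_mem := by
    refine ⟨1, ?_⟩
    ext x
    simp only [Set.mem_singleton_iff, Set.mem_setOf_eq]
    exact ⟨fun hx => hx ▸ Relation.EqvGen.refl 1, fun hx => (jcl_one hx).mp rfl⟩
  inv_mem := by
    rintro T ⟨h, rfl⟩
    refine ⟨h⁻¹, ?_⟩
    ext x
    simp only [Set.mem_inv, Set.mem_setOf_eq]
    constructor
    · intro hx
      have := jcl_inv hx
      rwa [inv_inv] at this
    · intro hx
      have := jcl_inv hx
      rwa [inv_inv] at this
  mul_mem := by
    intro T hT U hU
    rw [mem_jspan_iff]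
    intro C hC
    exact C.mul_mem_carrier
      ((mem_jspan_iff S _).mp (Submodule.subset_span ⟨T, hT, rfl⟩) C hC)
      ((mem_jspan_iff S _).mp (Submodule.subset_span ⟨U, hU, rfl⟩) C hC)

lemma jring_isSubset (S : Set H) : (jring S).IsSubset S := by
  rw [SRing.IsSubset, SRing.carrier]
  rw [show (jring S).basicSets = jblocks S from rfl]
  rw [mem_jspan_iff]
  exact fun C hC => hC

lemma jring_min (S : Set H) (C : SRing H) (hC : C.IsSubset S) :
    (jring S).carrier ≤ C.carrier := fun f hf =>
  (mem_jspan_iff S f).mp hf C hC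

end Aux

/-- the smallest S-ring containing `S` exists, and its
automorphism group is `Aut(Cay(H,S))`. -/
theorem stmt14 {H : Type*} [Group H] [Fintype H] (S : Set H) :
    (∃ B : SRing H, B.IsSubset S ∧
      ∀ C : SRing H, C.IsSubset S → B.carrier ≤ C.carrier) ∧
    ∀ B : SRing H, B.IsSubset S →
      (∀ C : SRing H, C.IsSubset S → B.carrier ≤ C.carrier) →
      cayAut S = B.aut := by
  constructor
  case left => exact ⟨jring S, jring_isSubset S, jring_min S⟩
  case right =>
    intro B hBS hBmin
    have hG : rightRegular H ≤ cayAut S := rightRegular_le_cayAut S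
    have hAS : (schurian (cayAut S) hG).IsSubset S := by
      rw [SRing.IsSubset, SRing.mem_carrier_iff]
      rintro T ⟨h, rfl⟩ a ha b hb
      obtain ⟨ga, hga, hga1, rfl⟩ := ha
      obtain ⟨gb, hgb, hgb1, rfl⟩ := hb
      rw [simpleQ_apply, simpleQ_apply]
      congr 1
      rw [eq_iff_iff]
      have h1 := (mem_cayAut_iff.mp hga) 1 h
      have h2 := (mem_cayAut_iff.mp hgb) 1 h
      rw [hga1] at h1
      rw [hgb1] at h2
      simp only [inv_one, mul_one] at h1 h2
      exact h1.symm.trans h2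
    apply le_antisymm
    · intro gamma hgamma
      rw [SRing.mem_aut_iff]
      intro T hT
      have hTB : simpleQ T ∈ B.carrier := B.simpleQ_mem_carrier hT
      have hTA : simpleQ T ∈ (schurian (cayAut S) hG).carrier := hBmin _ hAS hTB
      refine cayAut_of_carrier _ hTA ?_
      rintro U ⟨h, rfl⟩ x y
      exact orbit_arc_iff hG hgamma h x y
    · exact B.aut_le_cayAut hBS

end
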